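/- Let (A_i)_{i≥1} and (B_i)_{i≥1} be sequences of real numbers with B_i > 0 for all i, let C ∈ ℝ, and suppose that A_N / B_N → C as N → ∞. Let (n_i)_{i≥1} be positive real numbers and set 𝒜_N = Σ_{i=1}^N n_i A_i and ℬ_N = Σ_{i=1}^N n_i B_i. If n_N B_N / ℬ_{N−1} → +∞ as N → ∞, then 𝒜_N / ℬ_N → C as N → ∞. -/

import Mathlib

open Filter Finset

theorem stmt1 (A B n : ℕ → ℝ) (hB : ∀ i, 0 < B i) (hn : ∀ i, 0 < n i) (C : ℝ)
    (hlim : Tendsto (fun i => A i / B i) atTop (nhds C))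
    (hgrow : Tendsto (fun N => n N * B N / ∑ i ∈ Finset.range N, n i * B i) atTop atTop) :
    Tendsto
      (fun N => (∑ i ∈ Finset.range N, n i * A i) / ∑ i ∈ Finset.range N, n i * B i)
      atTop (nhds C) := by
  have hg0 : ∀ i, 0 < n i * B i := fun i => mul_pos (hn i) (hB i)
  set S : ℕ → ℝ := fun N => ∑ i ∈ Finset.range N, n i * B i with hSdef
  have hmono : Monotone S := fun a b hab =>
    Finset.sum_le_sum_of_subset_of_nonneg (Finset.range_subset_range.2 hab)
      (fun i _ _ => (hg0 i).le)
  have hS1 : S 1 = n 0 * B 0 := by simp [hSdef]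
  have hS : Tendsto S atTop atTop := by
    rcases tendsto_of_monotone hmono with h | ⟨l, hl⟩
    · exact h
    · exfalso
      have hd : Tendsto (fun N => n N * B N) atTop (nhds 0) := by
        have h1 : Tendsto (fun N => S (N + 1) - S N) atTop (nhds (l - l)) :=
          (hl.comp (tendsto_add_atTop_nat 1)).sub hl
        simpa [hSdef, Finset.sum_range_succ] using h1
      have hl1 : S 1 ≤ l := hmono.ge_of_tendsto hl 1
      have hlpos : 0 < l := lt_of_lt_of_le (hS1 ▸ hg0 0) hl1
      have h2 : Tendsto (fun N => n N * B N / S N) atTop (nhds (0 / l)) :=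
        hd.div hl hlpos.ne'
      rw [zero_div] at h2
      exact not_tendsto_atTop_of_tendsto_nhds h2 hgrow
  have ho : (fun i => n i * A i - C * (n i * B i)) =o[atTop] (fun i => n i * B i) := by
    rw [Asymptotics.isLittleO_iff_tendsto (fun i h => absurd h (hg0 i).ne')]
    have heq : (fun i => (n i * A i - C * (n i * B i)) / (n i * B i)) =
        fun i => A i / B i - C := by
      funext i
      rw [sub_div, mul_div_mul_left _ _ (hn i).ne', mul_div_assoc,
        div_self (hg0 i).ne', mul_one]
    rw [heq]
    simpa using hlim.sub_const C
  have hsum := ho.sum_range (fun i => (hg0 i).le) hS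
  have hfin : Tendsto
      (fun N => (∑ i ∈ Finset.range N, (n i * A i - C * (n i * B i))) / S N)
      atTop (nhds 0) := hsum.tendsto_div_nhds_zero
  have hfin2 : Tendsto (fun N => (∑ i ∈ Finset.range N, n i * A i) / S N - C)
      atTop (nhds 0) := by
    apply hfin.congr'
    filter_upwards [eventually_ge_atTop 1] with N hN
    have hSpos : 0 < S N := lt_of_lt_of_le (hS1 ▸ hg0 0) (hmono hN)
    rw [Finset.sum_sub_distrib, ← Finset.mul_sum, sub_div, mul_div_assoc,
      div_self hSpos.ne', mul_one]
  have := hfin2.add_const C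
  simpa using this
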